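/- Let X ⊆ ℝ² be a closed set and let D ⊆ ℝ² be a subset for which there exists a homeomorphism h from the closed unit disk D² = {x ∈ ℝ² : ‖x‖₂ ≤ 1} onto D (with their subspace topologies) such that X ∩ D = h({x ∈ ℝ² : ‖x‖₂ = 1 and x₂ ≥ 0}), the image of the closed upper boundary semicircle. Then X ∪ D strongly deformation retracts onto X. (This is Case 1 of the proof of the main proposition: a disk-shaped false-positive region glued to X along one boundary arc can be pushed onto X.) -/

import Mathlib

open Set Metric

noncomputable section

/-- The plane modeled as `Fin 2 → ℝ` with the Pi (sup) norm. -/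
abbrev Plane : Type := Fin 2 → ℝ

/-- The Euclidean plane (for Euclidean-norm disks and annuli). -/
abbrev EPlane : Type := EuclideanSpace ℝ (Fin 2)

/-- The closed unit pixel `[i-1,i] × [j-1,j]` for a pixel index `(i,j)`. -/
def pixel (p : ℕ × ℕ) : Set Plane :=
  {x | x 0 ∈ Set.Icc ((p.1 : ℝ) - 1) (p.1 : ℝ) ∧ x 1 ∈ Set.Icc ((p.2 : ℝ) - 1) (p.2 : ℝ)}

/-- A binary image `S` lies on the `h × w` grid `{1,…,h} × {1,…,w}`. -/
def OnGrid (S : Set (ℕ × ℕ)) (h w : ℕ) : Prop :=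
  S ⊆ Set.Icc 1 h ×ˢ Set.Icc 1 w

/-- The foreground `F(S)` of a binary image. -/
def fg (S : Set (ℕ × ℕ)) : Set Plane := ⋃ p ∈ S, pixel p

/-- Closed `ε`-thickening `D_ε(X)` with respect to the sup norm. -/
def thick (ε : ℝ) (X : Set Plane) : Set Plane := {y | ∃ x ∈ X, ‖x - y‖ ≤ ε}

/-- `C` is a connected component of `A` (as a subset of the plane). -/
def IsCompOf (C A : Set Plane) : Prop := ∃ x ∈ A, C = connectedComponentIn A x

/-- Two subsets share a boundary edge if their closures intersect in an infinite set. -/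
def SharesEdge (C D : Set Plane) : Prop := (closure C ∩ closure D).Infinite

/-- `X` strongly deformation retracts onto `A`. -/
def SDR (X A : Set Plane) : Prop :=
  ∃ H : C(↥X × unitInterval, ↥X),
    (∀ x, H (x, 0) = x) ∧ (∀ x, ((H (x, 1) : Plane)) ∈ A) ∧
    (∀ a : ↥X, (a : Plane) ∈ A → ∀ t, H (a, t) = a)

def TPset (P G : Set (ℕ × ℕ)) (ε : ℝ) : Set Plane := thick ε (fg P) ∩ thick (2 * ε) (fg G)
def TNset (P G : Set (ℕ × ℕ)) (ε : ℝ) : Set Plane := (thick ε (fg P))ᶜ ∩ (thick (2 * ε) (fg G))ᶜ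
def FPset (P G : Set (ℕ × ℕ)) (ε : ℝ) : Set Plane := thick ε (fg P) ∩ (thick (2 * ε) (fg G))ᶜ
def FNset (P G : Set (ℕ × ℕ)) (ε : ℝ) : Set Plane := (thick ε (fg P))ᶜ ∩ thick (2 * ε) (fg G)

/-- A component `C` (of `FP` or `FN`) is regular: exactly one component of `TP` and exactly
one component of `TN` share a boundary edge with it. -/
def RegularComp (P G : Set (ℕ × ℕ)) (ε : ℝ) (C : Set Plane) : Prop :=
  (∃! T : Set Plane, IsCompOf T (TPset P G ε) ∧ SharesEdge T C) ∧
  (∃! T : Set Plane, IsCompOf T (TNset P G ε) ∧ SharesEdge T C)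

/-- The zero-loss hypothesis: every component of `FP` and every component of `FN` is regular. -/
def ZeroLoss (P G : Set (ℕ × ℕ)) (ε : ℝ) : Prop :=
  (∀ C : Set Plane, IsCompOf C (FPset P G ε) → RegularComp P G ε C) ∧
  (∀ C : Set Plane, IsCompOf C (FNset P G ε) → RegularComp P G ε C)

namespace DiskRetract

lemma enorm_eq (y : EPlane) : ‖y‖ = Real.sqrt ((y 0)^2 + (y 1)^2) := by
  rw [EuclideanSpace.norm_eq, Fin.sum_univ_two]
  simp [Real.norm_eq_abs, sq_abs]

/-- The straight-line homotopy in the disk pushing points up onto the upper semicircle. -/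
def dh (x : EPlane) (t : ℝ) : EPlane :=
  WithLp.toLp 2 ![x 0, (1 - t) * x 1 + t * Real.sqrt (1 - (x 0)^2)]

lemma dh_zero (x : EPlane) : dh x 0 = x := by
  ext i; fin_cases i <;> simp [dh]

lemma dh_cont : Continuous (fun p : EPlane × ℝ => dh p.1 p.2) := by
  refine (PiLp.continuous_toLp (p := 2) (β := fun _ : Fin 2 => ℝ)).comp
    (f := fun p : EPlane × ℝ => ![p.1 0, (1 - p.2) * p.1 1 + p.2 * Real.sqrt (1 - (p.1 0)^2)]) ?_
  apply continuous_pi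
  intro i
  fin_cases i
  · show Continuous fun p : EPlane × ℝ => p.1 0
    exact ((continuous_apply (0 : Fin 2)).comp (PiLp.continuous_ofLp (p := 2) (β := fun _ : Fin 2 => ℝ))).comp continuous_fst
  · show Continuous fun p : EPlane × ℝ =>
      (1 - p.2) * p.1 1 + p.2 * Real.sqrt (1 - (p.1 0)^2)
    have h0 : Continuous (fun p : EPlane × ℝ => p.1 0) :=
      ((continuous_apply 0).comp (PiLp.continuous_ofLp (p := 2) (β := fun _ : Fin 2 => ℝ))).comp continuous_fst
    have h1 : Continuous (fun p : EPlane × ℝ => p.1 1) :=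
      ((continuous_apply 1).comp (PiLp.continuous_ofLp (p := 2) (β := fun _ : Fin 2 => ℝ))).comp continuous_fst
    exact (((continuous_const.sub continuous_snd).mul h1).add
      (continuous_snd.mul (Real.continuous_sqrt.comp
        (continuous_const.sub (h0.pow 2)))))

lemma sq_sum_le {x : EPlane} (hx : ‖x‖ ≤ 1) : (x 0)^2 + (x 1)^2 ≤ 1 := by
  rw [enorm_eq] at hx
  nlinarith [Real.sq_sqrt (by positivity : (0:ℝ) ≤ (x 0)^2 + (x 1)^2),
    Real.sqrt_nonneg ((x 0)^2 + (x 1)^2)]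

lemma dh_mem {x : EPlane} (hx : ‖x‖ ≤ 1) {t : ℝ} (ht0 : 0 ≤ t) (ht1 : t ≤ 1) :
    ‖dh x t‖ ≤ 1 := by
  have hab := sq_sum_le hx
  set a := x 0 with ha
  set b := x 1 with hb
  have ha1 : a^2 ≤ 1 := by nlinarith
  set s := Real.sqrt (1 - a^2) with hsdef
  have hs0 : 0 ≤ s := Real.sqrt_nonneg _
  have hs : s^2 = 1 - a^2 := Real.sq_sqrt (by linarith)
  have hbs : b ≤ s ∧ -s ≤ b := by
    constructor <;> nlinarith [sq_nonneg (b - s), sq_nonneg (b + s)]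
  have hdh : dh x t = WithLp.toLp 2 ![a, (1 - t) * b + t * s] := rfl
  rw [hdh, enorm_eq]
  have h0 : (WithLp.toLp 2 ![a, (1 - t) * b + t * s] : EPlane) 0 = a := rfl
  have h1 : (WithLp.toLp 2 ![a, (1 - t) * b + t * s] : EPlane) 1 = (1 - t) * b + t * s := rfl
  rw [h0, h1]
  have hc : ((1 - t) * b + t * s)^2 ≤ s^2 := by
    have h1 : 0 ≤ s - ((1 - t) * b + t * s) := by
      nlinarith [mul_nonneg (by linarith : (0:ℝ) ≤ 1 - t) (by linarith [hbs.1] : (0:ℝ) ≤ s - b)]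
    have h2 : 0 ≤ s + ((1 - t) * b + t * s) := by
      nlinarith [mul_nonneg (by linarith : (0:ℝ) ≤ 1 - t) (by linarith [hbs.2] : (0:ℝ) ≤ s + b),
        mul_nonneg ht0 hs0]
    nlinarith [mul_nonneg h1 h2]
  have : a^2 + ((1 - t) * b + t * s)^2 ≤ 1 := by nlinarith
  calc Real.sqrt (a^2 + ((1 - t) * b + t * s)^2) ≤ Real.sqrt 1 :=
        Real.sqrt_le_sqrt this
    _ = 1 := Real.sqrt_one

lemma dh_fix {x : EPlane} (hn : ‖x‖ = 1) (hp : 0 ≤ x 1) (t : ℝ) : dh x t = x := by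
  have hab : (x 0)^2 + (x 1)^2 = 1 := by
    have h := hn
    rw [enorm_eq] at h
    nlinarith [Real.sq_sqrt (by positivity : (0:ℝ) ≤ (x 0)^2 + (x 1)^2)]
  have hs : Real.sqrt (1 - (x 0)^2) = x 1 := by
    have : 1 - (x 0)^2 = (x 1)^2 := by linarith
    rw [this, Real.sqrt_sq hp]
  ext i
  fin_cases i
  · rfl
  · show (1 - t) * x 1 + t * Real.sqrt (1 - (x 0)^2) = x 1
    rw [hs]; ring

lemma dh_one {x : EPlane} (hx : ‖x‖ ≤ 1) : ‖dh x 1‖ = 1 ∧ 0 ≤ dh x 1 1 := by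
  have hab := sq_sum_le hx
  have ha1 : (x 0)^2 ≤ 1 := by nlinarith [sq_nonneg (x 1)]
  have h0 : dh x 1 0 = x 0 := by simp [dh]
  have h1 : dh x 1 1 = Real.sqrt (1 - (x 0)^2) := by simp [dh]
  constructor
  · rw [enorm_eq, h0, h1, Real.sq_sqrt (by linarith : (0:ℝ) ≤ 1 - (x 0)^2)]
    simp
  · rw [h1]; exact Real.sqrt_nonneg _

end DiskRetract

/-- If a closed set `X ⊆ ℝ²` meets a topological closed disk `D` exactly in
the image of the closed upper boundary semicircle, then `X ∪ D` strongly deformation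
retracts onto `X`. -/
theorem union_with_disk_glued_along_arc_deformation_retracts
    (X D : Set Plane) (hX : IsClosed X)
    (e : ↥(Metric.closedBall (0 : EPlane) 1) ≃ₜ ↥D)
    (hXD : ∀ d : ↥D, ((d : Plane) ∈ X ↔
      ‖((e.symm d : ↥(Metric.closedBall (0 : EPlane) 1)) : EPlane)‖ = 1 ∧
      0 ≤ ((e.symm d : ↥(Metric.closedBall (0 : EPlane) 1)) : EPlane) 1)) :
    SDR (X ∪ D) X := by
  classical
  open DiskRetract in
  -- `D` is compact, hence closed.
  have hBallCompact : CompactSpace ↥(Metric.closedBall (0 : EPlane) 1) :=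
    isCompact_iff_compactSpace.mp (isCompact_closedBall _ _)
  have hDCompactSpace : CompactSpace ↥D := e.compactSpace
  have hDcomp : IsCompact D := isCompact_iff_compactSpace.mpr hDCompactSpace
  have hDclosed : IsClosed D := hDcomp.isClosed
  set Y : Set Plane := X ∪ D with hY
  -- the homotopy on `D`, transported from the disk
  have memE : ∀ d : ↥D, ‖((e.symm d : ↥(Metric.closedBall (0 : EPlane) 1)) : EPlane)‖ ≤ 1 := by
    intro d
    have := (e.symm d).2
    rwa [Metric.mem_closedBall, dist_zero_right] at this
  let g : ↥D × unitInterval → ↥D := fun p =>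
    e ⟨DiskRetract.dh ((e.symm p.1 : ↥(Metric.closedBall (0 : EPlane) 1)) : EPlane) (p.2 : ℝ),
      by
        rw [Metric.mem_closedBall, dist_zero_right]
        exact DiskRetract.dh_mem (memE p.1) p.2.2.1 p.2.2.2⟩
  have hg : Continuous g := by
    apply e.continuous.comp
    apply Continuous.subtype_mk
    exact DiskRetract.dh_cont.comp ((continuous_subtype_val.comp
      (e.symm.continuous.comp continuous_fst)).prodMk
      (continuous_subtype_val.comp continuous_snd))
  -- `g` fixes points of the arc (i.e. of `X ∩ D`)
  have hgfix : ∀ (d : ↥D) (t : unitInterval), (d : Plane) ∈ X → g (d, t) = d := by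
    intro d t hd
    obtain ⟨hn, hp⟩ := (hXD d).mp hd
    have hfix : DiskRetract.dh ((e.symm d : ↥(Metric.closedBall (0 : EPlane) 1)) : EPlane) (t : ℝ)
        = ((e.symm d : ↥(Metric.closedBall (0 : EPlane) 1)) : EPlane) :=
      DiskRetract.dh_fix hn hp _
    show e ⟨_, _⟩ = d
    conv_rhs => rw [← e.apply_symm_apply d]
    exact congrArg e (Subtype.ext hfix)
  -- the global map into the plane
  let F : ↥Y × unitInterval → Plane := fun p =>
    if hp : (p.1 : Plane) ∈ D then ((g (⟨p.1, hp⟩, p.2) : ↥D) : Plane) else (p.1 : Plane)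
  have hF_onX : ∀ p : ↥Y × unitInterval, (p.1 : Plane) ∈ X → F p = (p.1 : Plane) := by
    intro p hp
    by_cases hd : (p.1 : Plane) ∈ D
    · show dite _ _ _ = _
      rw [dif_pos hd, hgfix ⟨p.1, hd⟩ p.2 hp]
    · show dite _ _ _ = _
      rw [dif_neg hd]
  have hF_mem : ∀ p : ↥Y × unitInterval, F p ∈ Y := by
    intro p
    by_cases hd : (p.1 : Plane) ∈ D
    · show dite _ _ _ ∈ Y
      rw [dif_pos hd]
      exact Or.inr (g (⟨p.1, hd⟩, p.2)).2
    · show dite _ _ _ ∈ Y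
      rw [dif_neg hd]
      exact p.1.2
  -- continuity of `F` by gluing over the closed cover by `A` and `B`
  set A : Set (↥Y × unitInterval) := {p | (p.1 : Plane) ∈ X} with hA
  set B : Set (↥Y × unitInterval) := {p | (p.1 : Plane) ∈ D} with hB
  have hAclosed : IsClosed A :=
    hX.preimage (continuous_subtype_val.comp continuous_fst)
  have hBclosed : IsClosed B :=
    hDclosed.preimage (continuous_subtype_val.comp continuous_fst)
  have hcover : A ∪ B = Set.univ := by
    ext p
    simp only [Set.mem_union, Set.mem_setOf_eq, Set.mem_univ, iff_true, hA, hB]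
    exact p.1.2
  have hFA : ContinuousOn F A := by
    apply ContinuousOn.congr
      (f := fun p : ↥Y × unitInterval => (p.1 : Plane))
    · exact (continuous_subtype_val.comp continuous_fst).continuousOn
    · intro p hp
      exact hF_onX p hp
  have hFB : ContinuousOn F B := by
    rw [continuousOn_iff_continuous_restrict]
    have heq : B.domRestrict F = fun q : ↥B =>
        ((g (⟨⟨(q : ↥Y × unitInterval).1, q.2⟩, (q : ↥Y × unitInterval).2⟩) : ↥D) : Plane) := by
      funext q
      exact dif_pos q.2
    rw [heq]
    apply continuous_subtype_val.comp
    apply hg.comp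
    exact (Continuous.subtype_mk
      (continuous_subtype_val.comp (continuous_fst.comp continuous_subtype_val)) _).prodMk
      (continuous_snd.comp continuous_subtype_val)
  have hFcont : Continuous F := by
    rw [continuous_iff_isClosed]
    intro C hC
    have : F ⁻¹' C = (A ∩ F ⁻¹' C) ∪ (B ∩ F ⁻¹' C) := by
      ext p
      constructor
      · intro hp
        rcases p.1.2 with h | h
        · exact Or.inl ⟨h, hp⟩
        · exact Or.inr ⟨h, hp⟩
      · rintro (⟨_, hp⟩ | ⟨_, hp⟩) <;> exact hp
    rw [this]
    exact (hFA.preimage_isClosed_of_isClosed hAclosed hC).union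
      (hFB.preimage_isClosed_of_isClosed hBclosed hC)
  -- assemble the deformation retraction
  refine ⟨⟨fun p => ⟨F p, hF_mem p⟩, hFcont.subtype_mk _⟩, ?_, ?_, ?_⟩
  · -- H (x, 0) = x
    intro x
    apply Subtype.ext
    show F (x, 0) = (x : Plane)
    by_cases hd : (x : Plane) ∈ D
    · show dite _ _ _ = _
      rw [dif_pos hd]
      have h0 : g (⟨x, hd⟩, 0) = ⟨x, hd⟩ := by
        show e ⟨_, _⟩ = _
        conv_rhs => rw [← e.apply_symm_apply (⟨(x : Plane), hd⟩ : ↥D)]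
        refine congrArg e (Subtype.ext ?_)
        exact DiskRetract.dh_zero _
      rw [h0]
    · show dite _ _ _ = _
      rw [dif_neg hd]
  · -- H (x, 1) ∈ X
    intro x
    show F (x, 1) ∈ X
    by_cases hd : (x : Plane) ∈ D
    · show dite _ _ _ ∈ X
      rw [dif_pos hd]
      set d : ↥D := ⟨x, hd⟩
      apply (hXD (g (d, 1))).mpr
      have hsymm : e.symm (g (d, 1)) =
          ⟨DiskRetract.dh ((e.symm d : ↥(Metric.closedBall (0 : EPlane) 1)) : EPlane)
            ((1 : unitInterval) : ℝ), _⟩ := e.symm_apply_apply _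
      rw [hsymm]
      exact DiskRetract.dh_one (memE d)
    · show dite _ _ _ ∈ X
      rw [dif_neg hd]
      rcases x.2 with h | h
      · exact h
      · exact absurd h hd
  · -- H (a, t) = a for a ∈ X
    intro a ha t
    apply Subtype.ext
    exact hF_onX (a, t) ha

end
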